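/- Let f: ℝ^{n1×k} × ℝ^{k×n2} → ℝ^{n1×n2} be the matrix product map f(A,B) = AB. Then the partial derivatives of the (i,j) entry are ∂(AB)_{ij}/∂A_{rs} = δ_{ir} B_{sj} and ∂(AB)_{ij}/∂B_{st} = δ_{jt} A_{is}; consequently the row of the Jacobian of f at (A,B) indexed by (i,j) coincides with the row of edge (i,j') in the bipartite hyperconnectivity matrix of the points given by the rows a_1,…,a_{n1} of A and the columns b_1,…,b_{n2} of B in ℝ^k. -/

import Mathlib

open Finset

/-- The matrix product map `f(A,B) = AB`. -/
def matMul (n1 n2 k : ℕ) (AB : (Fin n1 → Fin k → ℝ) × (Fin k → Fin n2 → ℝ)) :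
    Fin n1 → Fin n2 → ℝ :=
  fun i j => ∑ s, AB.1 i s * AB.2 s j

/-- The single-entry matrix with a `1` in position `(r,s)`. -/
def unitMat {m n : ℕ} (r : Fin m) (s : Fin n) : Fin m → Fin n → ℝ :=
  fun a b => if a = r ∧ b = s then 1 else 0

/-- The row of edge `(i,j')` in the bipartite hyperconnectivity matrix of the points
given by the rows `a_i` of `A` and the columns `b_j` of `B` in `ℝ^k`. -/
def bipRow (n1 n2 k : ℕ) (A : Fin n1 → Fin k → ℝ) (B : Fin k → Fin n2 → ℝ)
    (i : Fin n1) (j : Fin n2) : (Fin n1 × Fin k) ⊕ (Fin k × Fin n2) → ℝ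
  | Sum.inl (r, s) => if r = i then B s j else 0
  | Sum.inr (s, t) => if t = j then A i s else 0

noncomputable def E1 (n1 n2 k : ℕ) (i : Fin n1) (s : Fin k) :
    ((Fin n1 → Fin k → ℝ) × (Fin k → Fin n2 → ℝ)) →L[ℝ] ℝ :=
  (ContinuousLinearMap.proj s : (Fin k → ℝ) →L[ℝ] ℝ).comp
    ((ContinuousLinearMap.proj i : (Fin n1 → Fin k → ℝ) →L[ℝ] (Fin k → ℝ)).comp
      (ContinuousLinearMap.fst ℝ (Fin n1 → Fin k → ℝ) (Fin k → Fin n2 → ℝ)))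

noncomputable def E2 (n1 n2 k : ℕ) (s : Fin k) (j : Fin n2) :
    ((Fin n1 → Fin k → ℝ) × (Fin k → Fin n2 → ℝ)) →L[ℝ] ℝ :=
  (ContinuousLinearMap.proj j : (Fin n2 → ℝ) →L[ℝ] ℝ).comp
    ((ContinuousLinearMap.proj s : (Fin k → Fin n2 → ℝ) →L[ℝ] (Fin n2 → ℝ)).comp
      (ContinuousLinearMap.snd ℝ (Fin n1 → Fin k → ℝ) (Fin k → Fin n2 → ℝ)))

noncomputable def D (n1 n2 k : ℕ) (A : Fin n1 → Fin k → ℝ) (B : Fin k → Fin n2 → ℝ)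
    (i : Fin n1) (j : Fin n2) :
    ((Fin n1 → Fin k → ℝ) × (Fin k → Fin n2 → ℝ)) →L[ℝ] ℝ :=
  ∑ s, (A i s • E2 n1 n2 k s j + B s j • E1 n1 n2 k i s)

lemma hasFDeriv_matMul (n1 n2 k : ℕ) (A : Fin n1 → Fin k → ℝ) (B : Fin k → Fin n2 → ℝ) :
    HasFDerivAt (matMul n1 n2 k)
      (ContinuousLinearMap.pi fun i => ContinuousLinearMap.pi fun j => D n1 n2 k A B i j)
      (A, B) := by
  rw [show matMul n1 n2 k = fun AB i => (fun j => ∑ s, AB.1 i s * AB.2 s j) from rfl]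
  rw [hasFDerivAt_pi]
  intro i
  rw [hasFDerivAt_pi]
  intro j
  have h : ∀ s : Fin k, HasFDerivAt (fun AB : (Fin n1 → Fin k → ℝ) × (Fin k → Fin n2 → ℝ) =>
      AB.1 i s * AB.2 s j) (A i s • E2 n1 n2 k s j + B s j • E1 n1 n2 k i s) (A, B) := by
    intro s
    have h0 := ((E1 n1 n2 k i s).hasFDerivAt (x := (A, B))).mul
      ((E2 n1 n2 k s j).hasFDerivAt (x := (A, B)))
    exact h0
  exact HasFDerivAt.fun_sum (fun s _ => h s)

lemma fderiv_matMul_apply (n1 n2 k : ℕ) (A : Fin n1 → Fin k → ℝ) (B : Fin k → Fin n2 → ℝ)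
    (v : (Fin n1 → Fin k → ℝ) × (Fin k → Fin n2 → ℝ)) (i : Fin n1) (j : Fin n2) :
    fderiv ℝ (matMul n1 n2 k) (A, B) v i j =
      ∑ s, (A i s * v.2 s j + B s j * v.1 i s) := by
  rw [(hasFDeriv_matMul n1 n2 k A B).fderiv]
  simp [D, E1, E2, ContinuousLinearMap.pi_apply, ContinuousLinearMap.sum_apply]

theorem jacobian_matMul_eq_hyperRow (n1 n2 k : ℕ)
    (A : Fin n1 → Fin k → ℝ) (B : Fin k → Fin n2 → ℝ) :
    (∀ (i : Fin n1) (j : Fin n2) (r : Fin n1) (s : Fin k),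
      fderiv ℝ (matMul n1 n2 k) (A, B) (unitMat r s, 0) i j =
        if i = r then B s j else 0) ∧
    (∀ (i : Fin n1) (j : Fin n2) (s : Fin k) (t : Fin n2),
      fderiv ℝ (matMul n1 n2 k) (A, B) (0, unitMat s t) i j =
        if j = t then A i s else 0) ∧
    (∀ (i : Fin n1) (j : Fin n2) (c : (Fin n1 × Fin k) ⊕ (Fin k × Fin n2)),
      (match c with
        | Sum.inl (r, s) => fderiv ℝ (matMul n1 n2 k) (A, B) (unitMat r s, 0) i j
        | Sum.inr (s, t) => fderiv ℝ (matMul n1 n2 k) (A, B) (0, unitMat s t) i j) =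
        bipRow n1 n2 k A B i j c) := by
  have h1 : ∀ (i : Fin n1) (j : Fin n2) (r : Fin n1) (s : Fin k),
      fderiv ℝ (matMul n1 n2 k) (A, B) (unitMat r s, 0) i j =
        if i = r then B s j else 0 := by
    intro i j r s
    rw [fderiv_matMul_apply]
    simp only [unitMat, Pi.zero_apply, mul_zero, zero_add]
    by_cases h : i = r
    · simp [h, mul_ite, mul_one, mul_zero, Finset.sum_ite_eq']
    · simp [h]
  have h2 : ∀ (i : Fin n1) (j : Fin n2) (s : Fin k) (t : Fin n2),
      fderiv ℝ (matMul n1 n2 k) (A, B) (0, unitMat s t) i j =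
        if j = t then A i s else 0 := by
    intro i j s t
    rw [fderiv_matMul_apply]
    simp only [unitMat, Pi.zero_apply, mul_zero, zero_add, add_zero]
    by_cases h : j = t
    · simp [h, mul_ite, mul_one, mul_zero, Finset.sum_ite_eq']
    · simp [h]
  refine ⟨h1, h2, ?_⟩
  rintro i j (⟨r, s⟩ | ⟨s, t⟩)
  · simp only [bipRow, h1]
    by_cases h : i = r <;> simp [h, eq_comm]
  · simp only [bipRow, h2]
    by_cases h : j = t <;> simp [h, eq_comm]
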